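/- arXiv:2409.04765 — 3 statements merged into one kernel-verified Lean document; each statement's English description precedes it below -/
import Mathlib

section
/- For a nonempty closed convex set S ⊆ ℝ^m and any points x₁, x₂ ∈ S and vector ξ ∈ ℝ^m, the projection of ξ onto the tangent cone of S at x₁ satisfies ⟨x₁ - x₂, Π_S(x₁, ξ)⟩ ≤ ⟨x₁ - x₂, ξ⟩. -/
open RealInnerProductSpace

/-- For a nonempty closed convex set `S ⊆ ℝ^m`, points `x₁ x₂ ∈ S` and a
vector `ξ`, the metric projection `p` of `ξ` onto the tangent cone of `S` at `x₁`
(the closure of `⋃_{δ>0} (1/δ)(S - x₁)`) satisfies `⟪x₁ - x₂, p⟫ ≤ ⟪x₁ - x₂, ξ⟫`. -/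
theorem stmt0 (m : ℕ) (S : Set (EuclideanSpace ℝ (Fin m)))
    (hne : S.Nonempty) (hcl : IsClosed S) (hconv : Convex ℝ S)
    (x₁ x₂ : EuclideanSpace ℝ (Fin m)) (hx₁ : x₁ ∈ S) (hx₂ : x₂ ∈ S)
    (ξ p : EuclideanSpace ℝ (Fin m))
    (T : Set (EuclideanSpace ℝ (Fin m)))
    (hT : T = closure {v | ∃ δ : ℝ, 0 < δ ∧ ∃ s ∈ S, v = δ⁻¹ • (s - x₁)})
    (hpT : p ∈ T) (hproj : ∀ y ∈ T, dist ξ p ≤ dist ξ y) :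
    ⟪x₁ - x₂, p⟫ ≤ ⟪x₁ - x₂, ξ⟫ := by
  set C : Set (EuclideanSpace ℝ (Fin m)) :=
    {v | ∃ δ : ℝ, 0 < δ ∧ ∃ s ∈ S, v = δ⁻¹ • (s - x₁)} with hC
  -- C is convex
  have hCconv : Convex ℝ C := by
    rintro v ⟨δ, hδ, s, hs, rfl⟩ w ⟨ε, hε, s', hs', rfl⟩ a b ha hb hab
    rcases eq_or_lt_of_le ha with h0 | ha'
    · refine ⟨ε, hε, s', hs', ?_⟩
      have : b = 1 := by linarith
      simp [← h0, this]
    rcases eq_or_lt_of_le hb with h0 | hb'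
    · refine ⟨δ, hδ, s, hs, ?_⟩
      have : a = 1 := by linarith
      simp [← h0, this]
    · set α := a * δ⁻¹ with hα
      set β := b * ε⁻¹ with hβ
      have hαpos : 0 < α := mul_pos ha' (inv_pos.2 hδ)
      have hβpos : 0 < β := mul_pos hb' (inv_pos.2 hε)
      have hsum : 0 < α + β := by linarith
      set s'' := (α / (α + β)) • s + (β / (α + β)) • s' with hs''
      have hs''S : s'' ∈ S := by
        apply hconv hs hs' (by positivity) (by positivity)
        field_simp
      refine ⟨(α + β)⁻¹, inv_pos.2 hsum, s'', hs''S, ?_⟩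
      rw [inv_inv]
      have h1 : a • δ⁻¹ • (s - x₁) + b • ε⁻¹ • (s' - x₁) = α • (s - x₁) + β • (s' - x₁) := by
        simp [hα, hβ, smul_smul]
      rw [h1, hs'']
      have hne' : α + β ≠ 0 := ne_of_gt hsum
      have e1 : (α + β) * (α / (α + β)) = α := by field_simp
      have e2 : (α + β) * (β / (α + β)) = β := by field_simp
      have e3 : (α + β) • ((α / (α + β)) • s + (β / (α + β)) • s' - x₁)
          = α • s + β • s' - (α + β) • x₁ := by
        rw [smul_sub, smul_add, smul_smul, smul_smul, e1, e2]
      rw [e3]; module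
  -- C is closed under positive scaling
  have hCscale : ∀ t : ℝ, 0 < t → ∀ v ∈ C, t • v ∈ C := by
    rintro t ht v ⟨δ, hδ, s, hs, rfl⟩
    refine ⟨δ / t, div_pos hδ ht, s, hs, ?_⟩
    rw [smul_smul]
    congr 1
    field_simp
  have hTconv : Convex ℝ T := hT ▸ hCconv.closure
  have hTscale : ∀ t : ℝ, 0 < t → ∀ v ∈ T, t • v ∈ T := by
    intro t ht v hv
    rw [hT] at hv ⊢
    exact Set.MapsTo.closure (fun x hx => hCscale t ht x hx) (continuous_const_smul t) hv
  -- x₂ - x₁ ∈ T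
  have hd : x₂ - x₁ ∈ T := by
    rw [hT]
    exact subset_closure ⟨1, one_pos, x₂, hx₂, by simp⟩
  -- p + (x₂ - x₁) ∈ T
  have hy : p + (x₂ - x₁) ∈ T := by
    have hmid : (1/2 : ℝ) • p + (1/2 : ℝ) • (x₂ - x₁) ∈ T :=
      hTconv hpT hd (by norm_num) (by norm_num) (by norm_num)
    have := hTscale 2 (by norm_num) _ hmid
    have heq : (2:ℝ) • ((1/2 : ℝ) • p + (1/2 : ℝ) • (x₂ - x₁)) = p + (x₂ - x₁) := by
      rw [smul_add, smul_smul, smul_smul]; norm_num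
    rwa [heq] at this
  -- variational inequality
  have hinf : ‖ξ - p‖ = ⨅ w : T, ‖ξ - w‖ := by
    haveI : Nonempty T := ⟨⟨p, hpT⟩⟩
    refine le_antisymm (le_ciInf fun w => by simpa [dist_eq_norm] using hproj w w.2) ?_
    exact ciInf_le ⟨0, fun r ⟨w, hw⟩ => hw ▸ norm_nonneg _⟩ (⟨p, hpT⟩ : T)
  have key := (norm_eq_iInf_iff_real_inner_le_zero hTconv hpT).mp hinf _ hy
  have h2 : p + (x₂ - x₁) - p = x₂ - x₁ := by abel
  rw [h2] at key
  have h3 : ⟪ξ - p, x₂ - x₁⟫ = ⟪x₁ - x₂, p⟫ - ⟪x₁ - x₂, ξ⟫ := by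
    simp only [inner_sub_left, inner_sub_right]
    linarith [real_inner_comm ξ x₂, real_inner_comm p x₂, real_inner_comm ξ x₁,
      real_inner_comm p x₁]
  linarith [h3 ▸ key]
end

section
/- For any vectors u, v ∈ ℝ^q, the inner product of u with the signum of v satisfies u^⊤ sgn(v) ≥ ‖u‖₁ - 2√q‖v - u‖, i.e., replacing sgn(u) by sgn(v) in the term u^⊤ sgn(·) incurs an error of at most 2√q‖v - u‖ from ‖u‖₁. -/
lemma ptwise (a b : ℝ) : |a| - a * Real.sign b ≤ 2 * |b - a| := by
  rcases lt_trichotomy b 0 with hb | hb | hb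
  · rw [Real.sign_of_neg hb]
    rcases le_or_gt a 0 with ha | ha
    · rw [abs_of_nonpos ha]; nlinarith [abs_nonneg (b - a)]
    · rw [abs_of_pos ha, abs_of_nonpos (by linarith : b - a ≤ 0)]; linarith
  · simp [hb, Real.sign_zero]
    have := abs_nonneg a
    have : |0 - a| = |a| := by simp
    nlinarith [abs_nonneg (0 - a)]
  · rw [Real.sign_of_pos hb]
    rcases le_or_gt 0 a with ha | ha
    · rw [abs_of_nonneg ha]; nlinarith [abs_nonneg (b - a)]
    · rw [abs_of_neg ha, abs_of_nonneg (by linarith : 0 ≤ b - a)]; linarith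

/-- For `u, v ∈ ℝ^q`, `u^⊤ sgn(v) ≥ ‖u‖₁ - 2√q·‖v - u‖`:
replacing `sgn(u)` by `sgn(v)` incurs an error of at most `2√q‖v - u‖` from `‖u‖₁`. -/
theorem stmt5 (q : ℕ) (u v : Fin q → ℝ) :
    (∑ i, |u i|) - 2 * Real.sqrt q * Real.sqrt (∑ i, (v i - u i) ^ 2)
      ≤ ∑ i, u i * Real.sign (v i) := by
  have h1 : ∑ i, |v i - u i| ≤ Real.sqrt q * Real.sqrt (∑ i, (v i - u i) ^ 2) := by
    have := Real.sum_mul_le_sqrt_mul_sqrt Finset.univ (fun _ => (1 : ℝ))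
      (fun i => |v i - u i|)
    simpa [sq_abs] using this
  have h2 : (∑ i, |u i|) - ∑ i, u i * Real.sign (v i) ≤ 2 * ∑ i, |v i - u i| := by
    rw [← Finset.sum_sub_distrib, Finset.mul_sum]
    exact Finset.sum_le_sum fun i _ => ptwise (u i) (v i)
  nlinarith [h1, h2]
end

section
/- Suppose μᵢ ∈ ℝ^q for i = 1,...,N, the constraint functions satisfy ‖gᵢ(t,xᵢ)‖ ≤ K_g, and K_μ ≥ N·K_g. If the communication graph is connected with symmetric adjacency a_{ij}, then Σᵢ gᵢ(t, xᵢ*)^⊤ μᵢ - (K_μ/2) Σᵢ Σⱼ a_{ij}‖μᵢ - μⱼ‖₁ ≤ Σᵢ gᵢ(t, xᵢ*)^⊤ μ̄ for μ̄ = (1/N)Σᵢ μᵢ; consequently, when Σᵢ gᵢ(t, xᵢ*) ≤ 0 componentwise and all μᵢ ≥ 0, the expression V₂ = Σᵢ gᵢ(t,xᵢ*)^⊤μᵢ - (K_μ/2)Σᵢ Σⱼ a_{ij}‖μᵢ-μⱼ‖₁ is nonpositive. -/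
open Finset

lemma walk_bound {N : ℕ} {G : SimpleGraph (Fin N)} (d : Fin N → Fin N → ℝ)
    (hd0 : ∀ i, d i i = 0) (htri : ∀ i j k, d i k ≤ d i j + d j k) :
    ∀ {i i' : Fin N} (w : G.Walk i i'),
      d i i' ≤ (w.darts.map (fun dt => d dt.toProd.1 dt.toProd.2)).sum := by
  intro i i' w
  induction w with
  | nil => simp [hd0]
  | @cons u b v h w ih =>
    simp only [SimpleGraph.Walk.darts_cons, List.map_cons, List.sum_cons]
    calc d u v ≤ d u b + d b v := htri _ _ _
    _ ≤ _ := by linarith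

lemma pair_bound {N : ℕ} {G : SimpleGraph (Fin N)} (hG : G.Connected)
    (a : Fin N → Fin N → ℝ) (hnn : ∀ i j, 0 ≤ a i j)
    (hedge : ∀ i j, G.Adj i j → 1 ≤ a i j)
    (d : Fin N → Fin N → ℝ) (hd0 : ∀ i, d i i = 0) (hdsym : ∀ i j, d i j = d j i)
    (hdnn : ∀ i j, 0 ≤ d i j) (htri : ∀ i j k, d i k ≤ d i j + d j k)
    (i i' : Fin N) :
    d i i' ≤ (1/2) * ∑ k, ∑ l, a k l * d k l := by
  classical
  obtain ⟨w0⟩ := hG.preconnected i i'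
  set w : G.Walk i i' := w0.toPath.1 with hw
  have hpath : w.IsPath := w0.toPath.2
  have hen : w.edges.Nodup := hpath.isTrail.edges_nodup
  have hdn : w.darts.Nodup := by
    have : (w.darts.map SimpleGraph.Dart.edge).Nodup := hen
    exact this.of_map _
  set f : G.Dart → ℝ := fun dt => d dt.toProd.1 dt.toProd.2 with hf
  have hfnn : ∀ dt : G.Dart, 0 ≤ f dt := fun dt => hdnn _ _
  set D : Finset G.Dart := w.darts.toFinset with hD
  have h1 : d i i' ≤ ∑ dt ∈ D, f dt := by
    have := walk_bound (G := G) d hd0 htri w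
    rwa [← List.sum_toFinset _ hdn] at this
  set R : Finset G.Dart := D.image SimpleGraph.Dart.symm with hR
  have hdisj : Disjoint D R := by
    rw [Finset.disjoint_right]
    intro dt hdtR hdtD
    rw [hR, Finset.mem_image] at hdtR
    obtain ⟨e, heD, he⟩ := hdtR
    have : e = dt := by
      apply List.inj_on_of_nodup_map hen
      · simpa [hD] using heD
      · simpa [hD] using hdtD
      · rw [← he, SimpleGraph.Dart.edge_symm]
    rw [this] at he
    exact SimpleGraph.Dart.symm_ne dt he
  have hsumR : ∑ dt ∈ R, f dt = ∑ dt ∈ D, f dt := by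
    rw [hR, Finset.sum_image (fun x _ y _ h => SimpleGraph.Dart.symm_involutive.injective h)]
    exact Finset.sum_congr rfl fun dt _ => by simp [hf, hdsym]
  have h2 : ∑ dt ∈ D ∪ R, f dt ≤ ∑ k, ∑ l, a k l * d k l := by
    rw [← Finset.sum_product']
    calc ∑ dt ∈ D ∪ R, f dt
        = ∑ p ∈ (D ∪ R).image SimpleGraph.Dart.toProd, d p.1 p.2 := by
          rw [Finset.sum_image (fun x _ y _ h => SimpleGraph.Dart.toProd_injective h)]
      _ ≤ ∑ p ∈ (D ∪ R).image SimpleGraph.Dart.toProd, a p.1 p.2 * d p.1 p.2 := by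
          apply Finset.sum_le_sum
          intro p hp
          rw [Finset.mem_image] at hp
          obtain ⟨dt, _, rfl⟩ := hp
          nlinarith [hedge _ _ dt.adj, hdnn dt.toProd.1 dt.toProd.2]
      _ ≤ ∑ p ∈ (univ : Finset (Fin N)) ×ˢ univ, a p.1 p.2 * d p.1 p.2 := by
          apply Finset.sum_le_sum_of_subset_of_nonneg
          · intro p _; simp
          · intro p _ _; exact mul_nonneg (hnn _ _) (hdnn _ _)
  have h3 : (2:ℝ) * ∑ dt ∈ D, f dt ≤ ∑ k, ∑ l, a k l * d k l := by
    rw [two_mul]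
    calc ∑ dt ∈ D, f dt + ∑ dt ∈ D, f dt = ∑ dt ∈ D, f dt + ∑ dt ∈ R, f dt := by rw [hsumR]
      _ = ∑ dt ∈ D ∪ R, f dt := (Finset.sum_union hdisj).symm
      _ ≤ _ := h2
  linarith

/-- With `‖gᵢ‖ ≤ K_g`, `K_μ ≥ N·K_g`, and a connected communication
graph with symmetric weights `a_{ij} ≥ 1` on edges, the multiplier disagreement
penalty dominates the feasibility cross-term:
`Σᵢ gᵢ^⊤μᵢ - (K_μ/2)ΣᵢΣⱼ a_{ij}‖μᵢ-μⱼ‖₁ ≤ Σᵢ gᵢ^⊤μ̄` for `μ̄ = (1/N)Σᵢμᵢ`;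
consequently if `Σᵢ gᵢ ≤ 0` componentwise and all `μᵢ ≥ 0`, then `V₂ ≤ 0`. -/
theorem stmt15 (N q : ℕ) (hN : 1 ≤ N) (G : SimpleGraph (Fin N)) (hG : G.Connected)
    (a : Fin N → Fin N → ℝ) (hsym : ∀ i j, a i j = a j i)
    (hnn : ∀ i j, 0 ≤ a i j) (hedge : ∀ i j, G.Adj i j → 1 ≤ a i j)
    (hnadj : ∀ i j, ¬ G.Adj i j → a i j = 0)
    (Kg Kμ : ℝ) (g μ : Fin N → Fin q → ℝ)
    (hKg : ∀ i, Real.sqrt (∑ j, (g i j) ^ 2) ≤ Kg)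
    (hKμ : (N : ℝ) * Kg ≤ Kμ) :
    ((∑ i, ∑ j, g i j * μ i j)
        - (Kμ / 2) * ∑ i, ∑ i', a i i' * (∑ j, |μ i j - μ i' j|)
      ≤ ∑ i, ∑ j, g i j * ((1 / (N : ℝ)) * ∑ i', μ i' j)) ∧
    ((∀ j, (∑ i, g i j) ≤ 0) → (∀ i j, 0 ≤ μ i j) →
      (∑ i, ∑ j, g i j * μ i j)
        - (Kμ / 2) * ∑ i, ∑ i', a i i' * (∑ j, |μ i j - μ i' j|) ≤ 0) := by
  have hNpos : (0:ℝ) < N := by exact_mod_cast hN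
  set d : Fin N → Fin N → ℝ := fun k l => ∑ j, |μ k j - μ l j| with hd
  set S : ℝ := ∑ i, ∑ i', a i i' * d i i' with hSdef
  have hdnn : ∀ k l, 0 ≤ d k l := fun k l =>
    Finset.sum_nonneg fun j _ => abs_nonneg _
  have hS : 0 ≤ S :=
    Finset.sum_nonneg fun i _ => Finset.sum_nonneg fun i' _ =>
      mul_nonneg (hnn _ _) (hdnn _ _)
  have hKg0 : 0 ≤ Kg := le_trans (Real.sqrt_nonneg _) (hKg ⟨0, hN⟩)
  have hpair : ∀ k l, d k l ≤ S / 2 := by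
    intro k l
    have := pair_bound hG a hnn hedge d (fun i => by simp [hd])
      (fun i j => Finset.sum_congr rfl fun m _ => abs_sub_comm _ _)
      hdnn
      (fun i j k => by
        rw [hd, ← Finset.sum_add_distrib]
        exact Finset.sum_le_sum fun m _ => abs_sub_le _ _ _) k l
    linarith
  have hgb : ∀ i j, |g i j| ≤ Kg := by
    intro i j
    calc |g i j| = Real.sqrt ((g i j)^2) := (Real.sqrt_sq_eq_abs _).symm
      _ ≤ Real.sqrt (∑ m, (g i m)^2) := by
          exact Real.sqrt_le_sqrt (Finset.single_le_sum
            (f := fun m => (g i m)^2) (fun m _ => sq_nonneg _) (Finset.mem_univ j))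
      _ ≤ Kg := hKg i
  have hinner : ∀ i i', ∑ j, g i j * (μ i j - μ i' j) ≤ Kg * d i i' := by
    intro i i'
    rw [hd, Finset.mul_sum]
    refine Finset.sum_le_sum fun j _ => ?_
    calc g i j * (μ i j - μ i' j) ≤ |g i j * (μ i j - μ i' j)| := le_abs_self _
      _ = |g i j| * |μ i j - μ i' j| := abs_mul _ _
      _ ≤ Kg * |μ i j - μ i' j| := by
          apply mul_le_mul_of_nonneg_right (hgb i j) (abs_nonneg _)
  have e1 : (∑ i, ∑ j, g i j * μ i j)
      - ∑ i, ∑ j, g i j * ((1 / (N : ℝ)) * ∑ i', μ i' j)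
      = (1 / (N : ℝ)) * ∑ i, ∑ i', ∑ j, g i j * (μ i j - μ i' j) := by
    rw [← Finset.sum_sub_distrib, Finset.mul_sum]
    refine Finset.sum_congr rfl fun i _ => ?_
    rw [← Finset.sum_sub_distrib, Finset.sum_comm, Finset.mul_sum]
    refine Finset.sum_congr rfl fun j _ => ?_
    have hsum : ∑ i', g i j * (μ i j - μ i' j)
        = (N : ℝ) * (g i j * μ i j) - g i j * ∑ i', μ i' j := by
      simp [mul_sub, Finset.sum_sub_distrib, Finset.mul_sum, Finset.card_univ]
    rw [hsum]
    field_simp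
  have hmain : (∑ i, ∑ j, g i j * μ i j)
      - ∑ i, ∑ j, g i j * ((1 / (N : ℝ)) * ∑ i', μ i' j) ≤ (Kμ / 2) * S := by
    rw [e1]
    calc (1 / (N : ℝ)) * ∑ i, ∑ i', ∑ j, g i j * (μ i j - μ i' j)
        ≤ (1 / (N : ℝ)) * ∑ i : Fin N, ∑ i' : Fin N, Kg * (S / 2) := by
          apply mul_le_mul_of_nonneg_left _ (by positivity)
          apply Finset.sum_le_sum; intro i _
          apply Finset.sum_le_sum; intro i' _
          calc ∑ j, g i j * (μ i j - μ i' j) ≤ Kg * d i i' := hinner i i'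
            _ ≤ Kg * (S / 2) := mul_le_mul_of_nonneg_left (hpair i i') hKg0
      _ = (1 / (N : ℝ)) * ((N : ℝ) * ((N : ℝ) * (Kg * (S / 2)))) := by
          simp [Finset.sum_const, Finset.card_univ, mul_assoc]
      _ ≤ (Kμ / 2) * S := by
          rw [show (1 / (N : ℝ)) * ((N : ℝ) * ((N : ℝ) * (Kg * (S / 2))))
              = ((N : ℝ) * Kg) * (S / 2) by field_simp]
          nlinarith
  constructor
  · linarith
  · intro hg hμ
    have hbar : ∑ i, ∑ j, g i j * ((1 / (N : ℝ)) * ∑ i', μ i' j) ≤ 0 := by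
      rw [Finset.sum_comm]
      apply Finset.sum_nonpos
      intro j _
      rw [← Finset.sum_mul]
      apply mul_nonpos_of_nonpos_of_nonneg (hg j)
      exact mul_nonneg (by positivity)
        (Finset.sum_nonneg fun i' _ => hμ i' j)
    linarith
end
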